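/- ℚ is not a weakly uniserial ℤ-module. -/

import Mathlib

/-- The submodule of ℚ consisting of rationals of the form a / p^n. -/
def Dsub (p : ℕ) : Submodule ℤ ℚ where
  carrier := {x : ℚ | ∃ (a : ℤ) (n : ℕ), x * (p : ℚ)^n = (a : ℚ)}
  zero_mem' := ⟨0, 0, by simp⟩
  add_mem' := by
    rintro x y ⟨a, n, ha⟩ ⟨b, m, hb⟩
    refine ⟨a * (p:ℤ)^m + b * (p:ℤ)^n, n + m, ?_⟩
    push_cast
    rw [pow_add]
    linear_combination (p:ℚ)^m * ha + (p:ℚ)^n * hb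
  smul_mem' := by
    rintro z x ⟨a, n, ha⟩
    refine ⟨z * a, n, ?_⟩
    rw [zsmul_eq_mul]
    push_cast
    linear_combination (z:ℚ) * ha

lemma no_embed (p q : ℕ) (hp : 2 ≤ p) (hcop : Nat.Coprime p q) :
    ¬ ∃ f : Dsub p →ₗ[ℤ] Dsub q, Function.Injective f := by
  rintro ⟨f, hf⟩
  have hp0 : (p : ℚ) ≠ 0 := by positivity
  -- the element 1
  have h1 : (1 : ℚ) ∈ Dsub p := ⟨1, 0, by simp⟩
  set one : Dsub p := ⟨1, h1⟩ with hone
  set c : ℚ := (f one : ℚ) with hc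
  have hcne : c ≠ 0 := by
    intro h
    have : f one = 0 := by ext; exact h
    have := hf (by rw [this, map_zero] : f one = f 0)
    simp [hone, Subtype.ext_iff] at this
  -- pick k large
  set k : ℕ := c.num.natAbs with hk
  have hek : ((p : ℚ)^k)⁻¹ ∈ Dsub p := ⟨1, k, by field_simp; norm_num⟩
  set e : Dsub p := ⟨((p : ℚ)^k)⁻¹, hek⟩ with he
  have hsmul : ((p:ℤ)^k) • e = one := by
    ext
    push_cast [he, hone, zsmul_eq_mul]
    field_simp
  have hfe : (f one : ℚ) = (p:ℚ)^k * (f e : ℚ) := by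
    rw [← hsmul, map_smul]
    push_cast [zsmul_eq_mul]
    ring
  obtain ⟨a, m, ham⟩ := (f e).2
  have key : c * (q:ℚ)^m = (p:ℚ)^k * a := by
    rw [hc, hfe, mul_assoc, ham]
  -- turn into an integer equation
  have keyZ : c.num * (q:ℤ)^m = (p:ℤ)^k * a * c.den := by
    have h2 : (c.num : ℚ) * (q:ℚ)^m = (p:ℚ)^k * a * c.den := by
      have hcd : (c.num : ℚ) = c * c.den := by
        rw [Rat.mul_den_eq_num]
      rw [hcd]
      rw [mul_right_comm, key]
    exact_mod_cast h2
  have hdvd : (p:ℤ)^k ∣ c.num * (q:ℤ)^m := ⟨a * c.den, by linarith [keyZ]⟩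
  have hcop' : IsCoprime ((p:ℤ)^k) ((q:ℤ)^m) :=
    (Int.isCoprime_iff_gcd_eq_one.mpr (by exact_mod_cast hcop)).pow
  have hdvd2 : (p:ℤ)^k ∣ c.num := hcop'.dvd_of_dvd_mul_right hdvd
  have hdvdn : p^k ∣ c.num.natAbs := by
    have := Int.natAbs_dvd_natAbs.mpr hdvd2
    simpa [Int.natAbs_pow] using this
  have hnum : c.num ≠ 0 := Rat.num_ne_zero.mpr hcne
  have hle : p^k ≤ c.num.natAbs := Nat.le_of_dvd (Int.natAbs_pos.mpr hnum) hdvdn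
  have hlt : c.num.natAbs < p^k := by
    calc c.num.natAbs = k := rfl
    _ < 2^k := Nat.lt_two_pow_self
    _ ≤ p^k := Nat.pow_le_pow_left hp k
  omega

def IsWeaklyUniserial (R M : Type*) [Ring R] [AddCommGroup M] [Module R M] : Prop :=
  ∀ N K : Submodule R M,
    (∃ f : N →ₗ[R] K, Function.Injective f) ∨ (∃ f : K →ₗ[R] N, Function.Injective f)

theorem stmt_10 : ¬ IsWeaklyUniserial ℤ ℚ := by
  intro h
  rcases h (Dsub 2) (Dsub 3) with h' | h'
  · exact no_embed 2 3 (le_refl 2) (by norm_num) h'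
  · exact no_embed 3 2 (by norm_num) (by norm_num) h'
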